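/- Let c_r ∈ {2, 2c} for all r ∈ R with c ≥ 2 and R₂ ≥ c − 1 rooms of capacity 2. If F + M < Σ_{r∈R} c_r and at least one of F, M is odd, then the instance (F, M, R) is feasible, i.e., there exists S ⊆ R with Σ_{r∈S} c_r ≥ F and Σ_{r∈R\S} c_r ≥ M. -/
import Mathlib


/-- Single-period feasibility: female and male patients occupy disjoint sets of rooms. -/
def Feasible {ι : Type*} [DecidableEq ι] (R : Finset ι) (c : ι → ℕ) (F M : ℕ) : Prop :=
  ∃ S ⊆ R, F ≤ ∑ r ∈ S, c r ∧ M ≤ ∑ r ∈ R \ S, c r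

theorem strict_capacity_odd_feasible {ι : Type*} [DecidableEq ι]
    (R : Finset ι) (cap : ι → ℕ) (c : ℕ) (hc : 2 ≤ c)
    (hcap : ∀ r ∈ R, cap r = 2 ∨ cap r = 2 * c)
    (hR2 : c - 1 ≤ (R.filter fun r => cap r = 2).card)
    (F M : ℕ) (hlt : F + M < ∑ r ∈ R, cap r) (hodd : Odd F ∨ Odd M) :
    Feasible R cap F M := by
  classical
  set Rs := R.filter fun r => cap r = 2 with hRs
  set Rb := R.filter fun r => ¬ cap r = 2 with hRb
  set J := Rs.card with hJdef
  set K := Rb.card with hKdef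
  have hmemb : ∀ r ∈ Rb, cap r = 2 * c := by
    intro r hr
    rw [hRb, Finset.mem_filter] at hr
    rcases hcap r hr.1 with h | h
    · exact absurd h hr.2
    · exact h
  have hsumRs : ∑ r ∈ Rs, cap r = J * 2 :=
    Finset.sum_const_nat (fun r hr => (Finset.mem_filter.mp hr).2)
  have hsumRb : ∑ r ∈ Rb, cap r = K * (2 * c) :=
    Finset.sum_const_nat hmemb
  have hsplit : ∑ r ∈ Rs, cap r + ∑ r ∈ Rb, cap r = ∑ r ∈ R, cap r :=
    Finset.sum_filter_add_sum_filter_not R _ cap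
  have hT : ∑ r ∈ R, cap r = 2 * J + 2 * (c * K) := by
    rw [← hsplit, hsumRs, hsumRb]; ring
  set m := (F + 1) / 2 with hm
  have hFm : F ≤ 2 * m := by omega
  have hmT : 2 * m + M ≤ ∑ r ∈ R, cap r := by omega
  have hmJK : m ≤ J + c * K := by omega
  set k := min K (m / c) with hk
  have hkK : k ≤ K := min_le_left _ _
  have hckm : c * k ≤ m := by
    have h1 : c * (m / c) ≤ m := Nat.mul_div_le m c
    rcases min_cases K (m / c) with ⟨he, hle⟩ | ⟨he, hlt'⟩
    · -- k = K, K ≤ m / c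
      rw [hk, he]
      calc c * K ≤ c * (m / c) := Nat.mul_le_mul_left c hle
      _ ≤ m := h1
    · rw [hk, he]; exact h1
  set j := m - c * k with hj
  have hjJ : j ≤ J := by
    rcases min_cases K (m / c) with ⟨he, hle⟩ | ⟨he, hlt'⟩
    · have : k = K := by rw [hk, he]
      rw [hj, this]; omega
    · have hkeq : k = m / c := by rw [hk, he]
      have hdm := Nat.div_add_mod m c
      have hmc : m % c < c := Nat.mod_lt m (by omega)
      rw [hj, hkeq]
      set p := c * (m / c) with hp
      omega
  have hsum : c * k + j = m := by omega
  obtain ⟨Sb, hSbsub, hSbcard⟩ := Finset.exists_subset_card_eq hkK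
  obtain ⟨Ss, hSssub, hSscard⟩ := Finset.exists_subset_card_eq hjJ
  have hdisj : Disjoint Ss Sb := by
    rw [Finset.disjoint_left]
    intro r hrs hrb
    have h1 := (Finset.mem_filter.mp (hSssub hrs)).2
    have h2 := (Finset.mem_filter.mp (hSbsub hrb)).2
    exact h2 h1
  set S := Ss ∪ Sb with hS
  have hSsub : S ⊆ R := by
    rw [hS]
    apply Finset.union_subset
    · exact hSssub.trans (Finset.filter_subset _ _)
    · exact hSbsub.trans (Finset.filter_subset _ _)
  have hsumSs : ∑ r ∈ Ss, cap r = j * 2 := by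
    rw [← hSscard]
    exact Finset.sum_const_nat (fun r hr => (Finset.mem_filter.mp (hSssub hr)).2)
  have hsumSb : ∑ r ∈ Sb, cap r = k * (2 * c) := by
    rw [← hSbcard]
    exact Finset.sum_const_nat (fun r hr => hmemb r (hSbsub hr))
  have hsumS : ∑ r ∈ S, cap r = 2 * m := by
    rw [hS, Finset.sum_union hdisj, hsumSs, hsumSb, ← hsum]; ring
  refine ⟨S, hSsub, ?_, ?_⟩
  · omega
  · have hsd := Finset.sum_sdiff hSsub (f := cap)
    omega
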